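/- If the reduction condition Δl(d;ρ,x) + γ ≥ β_φ[l(0;ρ,x) − p(λ;ρ,x) + γ] holds with β_φ ∈ (0,1), then the KKT residuals are bounded: E_opt(x,λ,ρ) := ‖ρ∇f(x)+Σλ_i∇c_i(x)‖_* ≤ (1/(δβ_φ))Δl(d;ρ,x) + ((1−β_φ)/(δβ_φ))γ and E_c(x,λ) ≤ (1/β_φ)Δl(d;ρ,x) + ((1−β_φ)/β_φ)γ. -/

import Mathlib

open Finset

theorem stmt14 {n : ℕ} {ι : Type*} [DecidableEq ι] (E I : Finset ι) (hEI : Disjoint E I)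
    -- ∇f(x), ∇c_i(x), and the values c_i = c_i(x)
    (gf : EuclideanSpace ℝ (Fin n)) (gc : ι → EuclideanSpace ℝ (Fin n)) (c : ι → ℝ)
    (ρ δ γ β_φ : ℝ) (hρ : 0 ≤ ρ) (hδ : 0 < δ) (hγ : 0 < γ)
    (hβφ : β_φ ∈ Set.Ioo (0 : ℝ) 1)
    -- the dual norm ‖·‖_*
    (Nd : EuclideanSpace ℝ (Fin n) → ℝ) (hNdpos : ∀ u, 0 ≤ Nd u)
    -- dual feasible λ
    (lam : ι → ℝ)
    (hlamE : ∀ i ∈ E, lam i ∈ Set.Icc (-1 : ℝ) 1)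
    (hlamI : ∀ i ∈ I, lam i ∈ Set.Icc (0 : ℝ) 1)
    -- E_opt(x,λ,ρ) = ‖ρ∇f(x)+∑λ_i∇c_i(x)‖_*
    (Eopt : ℝ) (hEopt : Eopt = Nd (ρ • gf + ∑ i ∈ E ∪ I, lam i • gc i))
    -- the complementarity residual E_c(x,λ)
    (Ec : ℝ) (hEc : Ec = ∑ i ∈ (E ∪ I).filter (fun i => 0 < c i),
        (1 - lam i) * (if i ∈ E then |c i| else max (c i) 0) +
      (∑ i ∈ E.filter (fun i => c i < 0), (1 + lam i) * |c i| +
       ∑ i ∈ I.filter (fun i => c i < 0), lam i * |c i|))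
    -- l(0;ρ,x) = v(x) and p(λ;ρ,x) = −δE_opt + ⟨c(x),λ⟩
    (l0 p : ℝ) (hl0 : l0 = ∑ i ∈ E, |c i| + ∑ i ∈ I, max (c i) 0)
    (hp : p = -δ * Eopt + ∑ i ∈ E ∪ I, c i * lam i)
    -- Δl(d;ρ,x) ≥ 0 and the reduction condition Δl + γ ≥ β_φ[l(0;ρ,x) − p(λ;ρ,x) + γ]
    (Δ : ℝ) (hΔ : 0 ≤ Δ) (hred : β_φ * (l0 - p + γ) ≤ Δ + γ) :
    Eopt ≤ 1 / (δ * β_φ) * Δ + (1 - β_φ) / (δ * β_φ) * γ ∧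
    Ec ≤ 1 / β_φ * Δ + (1 - β_φ) / β_φ * γ := by
  obtain ⟨hβ0, hβ1⟩ := hβφ
  have hnotI : ∀ i ∈ E, i ∉ I := fun i hi => Finset.disjoint_left.mp hEI hi
  have hnotE : ∀ i ∈ I, i ∉ E := fun i hi => Finset.disjoint_right.mp hEI hi
  have hEopt0 : 0 ≤ Eopt := hEopt ▸ hNdpos _
  -- key identity: l0 - ∑ cλ = Ec
  have key : l0 - ∑ i ∈ E ∪ I, c i * lam i = Ec := by
    rw [hl0, hEc, Finset.sum_union hEI, Finset.sum_filter, Finset.sum_filter,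
      Finset.sum_filter, Finset.sum_union hEI]
    have hE : ∀ i ∈ E, |c i| - c i * lam i =
        (if 0 < c i then (1 - lam i) * (if i ∈ E then |c i| else max (c i) 0) else 0) +
        (if c i < 0 then (1 + lam i) * |c i| else 0) := by
      intro i hi
      simp only [hi, if_true]
      rcases lt_trichotomy (c i) 0 with h | h | h
      · rw [if_neg (by linarith), if_pos h, abs_of_neg h]; ring
      · simp [h]
      · rw [if_pos h, if_neg (by linarith), abs_of_pos h]; ring
    have hI : ∀ i ∈ I, max (c i) 0 - c i * lam i =
        (if 0 < c i then (1 - lam i) * (if i ∈ E then |c i| else max (c i) 0) else 0) +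
        (if c i < 0 then lam i * |c i| else 0) := by
      intro i hi
      rw [if_neg (hnotE i hi)]
      rcases lt_trichotomy (c i) 0 with h | h | h
      · rw [if_neg (by linarith), if_pos h, abs_of_neg h, max_eq_right h.le]; ring
      · simp [h]
      · rw [if_pos h, if_neg (by linarith), max_eq_left h.le]; ring
    have eE : ∑ i ∈ E, (|c i| - c i * lam i) =
        (∑ i ∈ E, if 0 < c i then (1 - lam i) * (if i ∈ E then |c i| else max (c i) 0) else 0) +
        ∑ i ∈ E, if c i < 0 then (1 + lam i) * |c i| else 0 := by
      rw [Finset.sum_congr rfl hE, Finset.sum_add_distrib]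
    have eI : ∑ i ∈ I, (max (c i) 0 - c i * lam i) =
        (∑ i ∈ I, if 0 < c i then (1 - lam i) * (if i ∈ E then |c i| else max (c i) 0) else 0) +
        ∑ i ∈ I, if c i < 0 then lam i * |c i| else 0 := by
      rw [Finset.sum_congr rfl hI, Finset.sum_add_distrib]
    have sE : ∑ i ∈ E, (|c i| - c i * lam i) = ∑ i ∈ E, |c i| - ∑ i ∈ E, c i * lam i :=
      Finset.sum_sub_distrib _ _
    have sI : ∑ i ∈ I, (max (c i) 0 - c i * lam i) = ∑ i ∈ I, max (c i) 0 - ∑ i ∈ I, c i * lam i :=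
      Finset.sum_sub_distrib _ _
    linarith
  -- Ec ≥ 0
  have hEc0 : 0 ≤ Ec := by
    rw [hEc]
    have h1 : (0:ℝ) ≤ ∑ i ∈ (E ∪ I).filter (fun i => 0 < c i),
        (1 - lam i) * (if i ∈ E then |c i| else max (c i) 0) := by
      apply Finset.sum_nonneg
      intro i hi
      simp only [Finset.mem_filter, Finset.mem_union] at hi
      have hlam : lam i ≤ 1 := by
        rcases hi.1 with h | h
        · exact (hlamE i h).2
        · exact (hlamI i h).2
      apply mul_nonneg (by linarith)
      split
      · exact abs_nonneg _
      · exact le_max_right _ _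
    have h2 : (0:ℝ) ≤ ∑ i ∈ E.filter (fun i => c i < 0), (1 + lam i) * |c i| := by
      apply Finset.sum_nonneg
      intro i hi
      simp only [Finset.mem_filter] at hi
      exact mul_nonneg (by have := (hlamE i hi.1).1; linarith) (abs_nonneg _)
    have h3 : (0:ℝ) ≤ ∑ i ∈ I.filter (fun i => c i < 0), lam i * |c i| := by
      apply Finset.sum_nonneg
      intro i hi
      simp only [Finset.mem_filter] at hi
      exact mul_nonneg (hlamI i hi.1).1 (abs_nonneg _)
    linarith
  have hgap : l0 - p = δ * Eopt + Ec := by rw [hp]; linarith [key]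
  rw [hgap] at hred
  have h1 : Eopt ≤ 1 / (δ * β_φ) * Δ + (1 - β_φ) / (δ * β_φ) * γ := by
    rw [div_mul_eq_mul_div, div_mul_eq_mul_div, ← add_div]
    rw [le_div_iff₀ (by positivity)]
    nlinarith
  have h2 : Ec ≤ 1 / β_φ * Δ + (1 - β_φ) / β_φ * γ := by
    rw [div_mul_eq_mul_div, div_mul_eq_mul_div, ← add_div]
    rw [le_div_iff₀ hβ0]
    nlinarith [mul_nonneg hδ.le hEopt0]
  exact ⟨h1, h2⟩
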